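/- For every β with 3/4 < β < 1 there exists a constant C = C(β) such that for every finitely supported sequence a : ℤ² → ℂ, the resonant nonlinearity satisfies ‖F(a)‖_{l²} ≤ C · ‖a‖_{l²}^{3−2β} · ‖a‖_{h¹}^{2β}; that is, the estimate ‖F(a)‖_{l²} ≲ ‖a‖_{l²}^{δ₁} ‖a‖_{h¹}^{3−δ₁} holds with δ₁ = 3 − 2β ∈ (1, 3/2). -/

import Mathlib

noncomputable section

/-- The Euclidean norm squared of a lattice point in `ℤ²`. -/
def nsq (j : ℤ × ℤ) : ℤ := j.1 ^ 2 + j.2 ^ 2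

/-- The discrete Sobolev norm `‖a‖_{h^s} = (∑_j ⟨j⟩^{2s} |a_j|²)^{1/2}`,
where `⟨j⟩^{2s} = (1 + |j|²)^s`.  In particular `hnorm 0 = ‖·‖_{l²}`. -/
def hnorm (s : ℝ) (a : ℤ × ℤ → ℂ) : ℝ :=
  (∑' j : ℤ × ℤ, ((1 : ℝ) + (nsq j : ℝ)) ^ s * ‖a j‖ ^ 2) ^ ((1 : ℝ) / 2)

/-- The cubic resonant nonlinearity
`F(a)_j = ∑_{(j1,j2,j3) ∈ R(j)} a_{j1} conj(a_{j2}) a_{j3}` with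
`R(j) = {(j1,j2,j3) : j1 - j2 + j3 = j, |j1|² - |j2|² + |j3|² = |j|²}`. -/
def Fnl (a : ℤ × ℤ → ℂ) (j : ℤ × ℤ) : ℂ :=
  ∑' p : (ℤ × ℤ) × (ℤ × ℤ) × (ℤ × ℤ),
    if p.1 - p.2.1 + p.2.2 = j ∧ nsq p.1 - nsq p.2.1 + nsq p.2.2 = nsq j then
      a p.1 * (starRingEnd ℂ) (a p.2.1) * a p.2.2
    else 0

namespace ResAux

abbrev J := ℤ × ℤ

/-- the weight `⟨k⟩² = 1 + |k|²` as a real number -/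
def w (k : J) : ℝ := 1 + (nsq k : ℝ)

/-- integer dot product -/
def dt (m n : J) : ℤ := m.1 * n.1 + m.2 * n.2

lemma nsq_nonneg (k : J) : (0:ℤ) ≤ nsq k := by
  have := sq_nonneg k.1; have := sq_nonneg k.2; simp [nsq]; nlinarith

lemma nsq_pos {k : J} (hk : k ≠ 0) : (0:ℤ) < nsq k := by
  have hor : k.1 ≠ 0 ∨ k.2 ≠ 0 := by
    by_contra hcon
    push_neg at hcon
    exact hk (Prod.ext hcon.1 hcon.2)
  have h1 := sq_nonneg k.1; have h2 := sq_nonneg k.2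
  rcases hor with h | h
  · have : 0 < k.1 ^ 2 := by positivity
    simp only [nsq]; nlinarith
  · have : 0 < k.2 ^ 2 := by positivity
    simp only [nsq]; nlinarith

lemma one_le_nsq {k : J} (hk : k ≠ 0) : (1:ℤ) ≤ nsq k := nsq_pos hk

lemma one_le_w (k : J) : 1 ≤ w k := by
  have := nsq_nonneg k
  simp only [w]
  have : (0:ℝ) ≤ (nsq k : ℝ) := by exact_mod_cast this
  linarith

lemma w_pos (k : J) : 0 < w k := lt_of_lt_of_le one_pos (one_le_w k)

/-- 1-D summability: `∑_{k∈ℤ} (1+k²)^{-τ} < ∞` for `τ > 1/2`. -/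
lemma summable_oneD {τ : ℝ} (hτ : 1/2 < τ) :
    Summable (fun k : ℤ => ((1:ℝ) + (k:ℝ)^2) ^ (-τ)) := by
  have hnat : Summable (fun n : ℕ => ((1:ℝ) + (n:ℝ)^2) ^ (-τ)) := by
    rw [← summable_nat_add_iff 1]
    have hg : Summable (fun n : ℕ => ((n:ℝ)+1) ^ (-(2*τ))) := by
      have h1 := (Real.summable_one_div_nat_rpow (p := 2*τ)).2 (by linarith)
      have h2 := (summable_nat_add_iff (f := fun n : ℕ => 1/(n:ℝ)^(2*τ)) 1).2 h1
      apply h2.congr; intro n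
      rw [Real.rpow_neg (by positivity), one_div]
      push_cast
      rfl
    apply hg.of_nonneg_of_le (fun n => Real.rpow_nonneg (by positivity) _)
    intro n
    have hbase : (0:ℝ) < ((n:ℝ)+1)^(2:ℕ) := by positivity
    have hle : ((n:ℝ)+1)^(2:ℕ) ≤ 1 + ((n+1:ℕ):ℝ)^2 := by push_cast; nlinarith
    have e1 : (((n:ℝ)+1)^(2:ℕ)) ^ (-τ) = ((n:ℝ)+1) ^ (-(2*τ)) := by
      rw [← Real.rpow_natCast ((n:ℝ)+1) 2, ← Real.rpow_mul (by positivity)]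
      norm_num
    calc ((1:ℝ) + ((n+1:ℕ):ℝ)^2) ^ (-τ) ≤ (((n:ℝ)+1)^(2:ℕ)) ^ (-τ) :=
          Real.rpow_le_rpow_of_nonpos hbase hle (by linarith)
      _ = _ := e1
  apply Summable.of_nat_of_neg
  · exact hnat.congr (fun n => by push_cast; ring_nf)
  · exact hnat.congr (fun n => by push_cast; ring_nf)

/-- 2-D summability: `∑_{k∈ℤ²} (w k)^{-τ} < ∞` for `τ > 1`. -/
lemma summable_twoD {τ : ℝ} (hτ : 1 < τ) :
    Summable (fun k : J => w k ^ (-τ)) := by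
  have h1 : Summable (fun k : ℤ => ((1:ℝ)+(k:ℝ)^2) ^ (-(τ/2))) := summable_oneD (by linarith)
  have hprod : Summable (fun k : J => ((1:ℝ)+(k.1:ℝ)^2)^(-(τ/2)) * ((1:ℝ)+(k.2:ℝ)^2)^(-(τ/2))) :=
    h1.mul_of_nonneg h1 (fun n => Real.rpow_nonneg (by positivity) _)
      (fun n => Real.rpow_nonneg (by positivity) _)
  apply hprod.of_nonneg_of_le (fun k => Real.rpow_nonneg (w_pos k).le _)
  intro k
  have hw : w k = 1 + (k.1:ℝ)^2 + (k.2:ℝ)^2 := by simp only [w, nsq]; push_cast; ring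
  have key : ((1:ℝ)+(k.1:ℝ)^2) * ((1:ℝ)+(k.2:ℝ)^2) ≤ (w k)^(2:ℕ) := by
    rw [hw]; nlinarith [sq_nonneg ((k.1:ℝ)*(k.2:ℝ)), sq_nonneg (k.1:ℝ), sq_nonneg (k.2:ℝ)]
  have e1 : ((w k)^(2:ℕ) : ℝ) ^ (-(τ/2)) = w k ^ (-τ) := by
    rw [← Real.rpow_natCast (w k) 2, ← Real.rpow_mul (w_pos k).le]
    congr 1; ring
  calc w k ^ (-τ) = ((w k)^(2:ℕ) : ℝ) ^ (-(τ/2)) := e1.symm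
    _ ≤ (((1:ℝ)+(k.1:ℝ)^2) * ((1:ℝ)+(k.2:ℝ)^2)) ^ (-(τ/2)) :=
        Real.rpow_le_rpow_of_nonpos (by positivity) key (by linarith)
    _ = _ := Real.mul_rpow (by positivity) (by positivity)

variable {β : ℝ}

/-- the 1-D zeta-type constant -/
def Z1 (σ : ℝ) : ℝ := ∑' k : ℤ, ((1:ℝ) + (k:ℝ)^2) ^ (-σ)

def CL (β : ℝ) : ℝ := 4 * Z1 (β - 1/4)

/-- the 2-D zeta-type constant -/
def Z2 (τ : ℝ) : ℝ := ∑' k : J, w k ^ (-τ)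

def KK (β : ℝ) : ℝ := 2 * CL β * Z2 (β + 1/4)

lemma Z1_nonneg (σ : ℝ) : 0 ≤ Z1 σ := tsum_nonneg (fun k => Real.rpow_nonneg (by positivity) _)

lemma Z2_nonneg (τ : ℝ) : 0 ≤ Z2 τ := tsum_nonneg (fun k => Real.rpow_nonneg (w_pos k).le _)

lemma CL_nonneg (β : ℝ) : 0 ≤ CL β := by have := Z1_nonneg (β - 1/4); simp [CL]; linarith

lemma KK_nonneg (β : ℝ) : 0 ≤ KK β := by
  have h1 := CL_nonneg β; have h2 := Z2_nonneg (β + 1/4)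
  simp only [KK]
  positivity

/-- Lagrange-type identity in ℤ²: if `v ⊥ m` then `(v·m⊥)² = |v|²|m|²`. -/
lemma lagrange {v m : J} (h : dt v m = 0) :
    (dt v (-m.2, m.1))^2 = nsq v * nsq m := by
  simp only [dt, nsq] at *
  nlinarith [h]

/-- Cauchy-Schwarz in ℤ²: `(v·m⊥)² ≤ |v|²|m|²`. -/
lemma cs_int (v m : J) : (dt v (-m.2, m.1))^2 ≤ nsq v * nsq m := by
  simp only [dt, nsq]
  nlinarith [sq_nonneg (v.1 * m.1 + v.2 * m.2)]

/-- The line lemma: a sum of `w(j+n)^{-β}` over lattice points `n ⊥ m`, all with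
`w(j+n) ≥ R`, is at most `CL β * R^{-1/4}`. -/
lemma line_bound (hβ1 : 3/4 < β) (hβ2 : β < 1) (j m : J) (hm : m ≠ 0) (R : ℝ) (hR : 1 ≤ R)
    (s : Finset J) (hs : ∀ n ∈ s, n ≠ 0 ∧ dt n m = 0 ∧ R ≤ w (j + n)) :
    ∑ n ∈ s, w (j + n) ^ (-β) ≤ CL β * R ^ (-(1/4) : ℝ) := by
  have hR0 : (0:ℝ) < R := lt_of_lt_of_le one_pos hR
  set σ : ℝ := β - 1/4 with hσ
  have hσ2 : 1/2 < σ := by rw [hσ]; linarith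
  have hσ1 : σ ≤ 1 := by rw [hσ]; linarith
  have hσ0 : 0 < σ := lt_trans (by norm_num : (0:ℝ) < 1/2) hσ2
  have hnsqm : (0:ℝ) < (nsq m : ℝ) := by exact_mod_cast nsq_pos hm
  set M : ℝ := Real.sqrt ((nsq m : ℝ)) with hM
  have hM0 : 0 < M := Real.sqrt_pos.mpr hnsqm
  have hM2 : M^2 = (nsq m : ℝ) := Real.sq_sqrt hnsqm.le
  set mp : J := (-m.2, m.1) with hmp
  set u : J → ℝ := fun n => ((dt (j+n) mp : ℤ) : ℝ) / M with hu
  -- pointwise bound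
  have hpt : ∀ n ∈ s, w (j+n) ^ (-β) ≤
      R ^ (-(1/4):ℝ) * (4 * ((1:ℝ) + (⌊u n⌋ : ℝ)^2) ^ (-σ)) := by
    intro n hn
    obtain ⟨hn0, hdt, hwR⟩ := hs n hn
    have hw1 := w_pos (j+n)
    have husq : (u n)^2 ≤ (nsq (j+n) : ℝ) := by
      have hcs : ((dt (j+n) mp : ℤ) : ℝ)^2 ≤ (nsq (j+n) : ℝ) * (nsq m : ℝ) := by
        have := cs_int (j+n) m
        rw [← hmp] at this
        exact_mod_cast this
      have : (u n)^2 = ((dt (j+n) mp : ℤ) : ℝ)^2 / (nsq m : ℝ) := by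
        rw [hu]; simp only []
        rw [div_pow, hM2]
      rw [this]
      rw [div_le_iff₀ hnsqm]
      exact hcs
    have hwu : (1:ℝ) + (u n)^2 ≤ w (j+n) := by
      simp only [w]; linarith
    have hupos : (0:ℝ) < 1 + (u n)^2 := by positivity
    -- split the exponent
    have hsplit : w (j+n) ^ (-β) = w (j+n) ^ (-(1/4):ℝ) * w (j+n) ^ (-σ) := by
      rw [← Real.rpow_add hw1]; congr 1; rw [hσ]; ring
    have h1 : w (j+n) ^ (-(1/4):ℝ) ≤ R ^ (-(1/4):ℝ) :=
      Real.rpow_le_rpow_of_nonpos hR0 hwR (by norm_num)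
    have h2 : w (j+n) ^ (-σ) ≤ ((1:ℝ) + (u n)^2) ^ (-σ) :=
      Real.rpow_le_rpow_of_nonpos hupos hwu (by linarith)
    -- floor comparison
    have hfl1 : ((⌊u n⌋ : ℝ)) ≤ u n := Int.floor_le (u n)
    have hfl2 : u n - 1 < (⌊u n⌋ : ℝ) := by
      have := Int.lt_floor_add_one (u n); linarith
    have hfl : (1:ℝ) + (⌊u n⌋ : ℝ)^2 ≤ 4 * (1 + (u n)^2) := by
      have hprod : (0:ℝ) ≤ ((⌊u n⌋:ℝ) - u n + 1) * (u n - (⌊u n⌋:ℝ)) :=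
        mul_nonneg (by linarith) (by linarith)
      nlinarith [hprod, sq_nonneg (u n - ((⌊u n⌋:ℝ) - u n)), sq_nonneg (u n)]
    have hflpos : (0:ℝ) < 1 + (⌊u n⌋ : ℝ)^2 := by positivity
    have h3 : ((1:ℝ) + (u n)^2) ^ (-σ) ≤ 4 * ((1:ℝ) + (⌊u n⌋ : ℝ)^2) ^ (-σ) := by
      have hstep : ((4:ℝ) * (1 + (u n)^2)) ^ (-σ) ≤ ((1:ℝ) + (⌊u n⌋ : ℝ)^2) ^ (-σ) :=
        Real.rpow_le_rpow_of_nonpos hflpos hfl (by linarith)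
      have hmul : ((4:ℝ) * (1 + (u n)^2)) ^ (-σ) = (4:ℝ)^(-σ) * (1 + (u n)^2)^(-σ) :=
        Real.mul_rpow (by norm_num) hupos.le
      have h4σ : (1:ℝ) = (4:ℝ)^(σ) * (4:ℝ)^(-σ) := by
        rw [← Real.rpow_add (by norm_num : (0:ℝ) < 4)]; simp
      have h4le : (4:ℝ)^(σ:ℝ) ≤ 4 := by
        calc (4:ℝ)^(σ:ℝ) ≤ (4:ℝ)^(1:ℝ) :=
              Real.rpow_le_rpow_of_exponent_le (by norm_num) hσ1
          _ = 4 := Real.rpow_one 4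
      calc ((1:ℝ) + (u n)^2) ^ (-σ) = (4:ℝ)^(σ) * ((4:ℝ)^(-σ) * (1 + (u n)^2)^(-σ)) := by
            rw [← mul_assoc, ← h4σ, one_mul]
        _ = (4:ℝ)^(σ) * ((4:ℝ) * (1 + (u n)^2)) ^ (-σ) := by rw [hmul]
        _ ≤ (4:ℝ)^(σ) * ((1:ℝ) + (⌊u n⌋ : ℝ)^2) ^ (-σ) := by
            apply mul_le_mul_of_nonneg_left hstep (Real.rpow_nonneg (by norm_num) _)
        _ ≤ 4 * ((1:ℝ) + (⌊u n⌋ : ℝ)^2) ^ (-σ) := by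
            apply mul_le_mul_of_nonneg_right h4le (Real.rpow_nonneg hflpos.le _)
    calc w (j+n) ^ (-β) = w (j+n) ^ (-(1/4):ℝ) * w (j+n) ^ (-σ) := hsplit
      _ ≤ R ^ (-(1/4):ℝ) * (4 * ((1:ℝ) + (⌊u n⌋ : ℝ)^2) ^ (-σ)) := by
          apply mul_le_mul h1 (le_trans h2 h3) (Real.rpow_nonneg hw1.le _)
            (Real.rpow_nonneg hR0.le _)
  -- injectivity of n ↦ ⌊u n⌋ on s
  have hinj : ∀ x ∈ s, ∀ y ∈ s, ⌊u x⌋ = ⌊u y⌋ → x = y := by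
    intro x hx y hy hfeq
    by_contra hne
    have hv0 : x - y ≠ 0 := sub_ne_zero.mpr hne
    have hdtv : dt (x - y) m = 0 := by
      have h1 := (hs x hx).2.1
      have h2 := (hs y hy).2.1
      simp only [dt, Prod.fst_sub, Prod.snd_sub] at *
      ring_nf
      ring_nf at h1 h2
      linarith
    have hlag : ((dt (x-y) mp : ℤ) : ℝ)^2 = (nsq (x-y) : ℝ) * (nsq m : ℝ) := by
      have := lagrange hdtv
      rw [← hmp] at this
      exact_mod_cast this
    have hdiff : (u x - u y)^2 = (nsq (x-y) : ℝ) := by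
      have hlin : u x - u y = ((dt (x-y) mp : ℤ) : ℝ) / M := by
        rw [hu]; simp only []
        rw [div_sub_div_same]
        congr 1
        have : dt (j+x) mp - dt (j+y) mp = dt (x-y) mp := by
          simp only [dt, Prod.fst_sub, Prod.snd_sub, Prod.fst_add, Prod.snd_add]; ring
        exact_mod_cast this
      rw [hlin, div_pow, hM2, hlag]
      field_simp
    have hge1 : (1:ℝ) ≤ (u x - u y)^2 := by
      rw [hdiff]
      exact_mod_cast one_le_nsq hv0
    have hlt1 : |u x - u y| < 1 := by
      have h1 := Int.floor_le (u x)
      have h2 := Int.lt_floor_add_one (u x)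
      have h3 := Int.floor_le (u y)
      have h4 := Int.lt_floor_add_one (u y)
      rw [hfeq] at h1 h2
      rw [abs_sub_lt_iff]
      constructor <;> linarith
    nlinarith [hge1, hlt1, abs_nonneg (u x - u y), sq_abs (u x - u y)]
  -- summation
  calc ∑ n ∈ s, w (j + n) ^ (-β)
      ≤ ∑ n ∈ s, R ^ (-(1/4):ℝ) * (4 * ((1:ℝ) + (⌊u n⌋ : ℝ)^2) ^ (-σ)) :=
        Finset.sum_le_sum hpt
    _ = R ^ (-(1/4):ℝ) * 4 * ∑ n ∈ s, ((1:ℝ) + (⌊u n⌋ : ℝ)^2) ^ (-σ) := by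
        rw [Finset.mul_sum]
        apply Finset.sum_congr rfl
        intros; ring
    _ = R ^ (-(1/4):ℝ) * 4 * ∑ k ∈ s.image (fun n => ⌊u n⌋), ((1:ℝ) + (k : ℝ)^2) ^ (-σ) := by
        rw [Finset.sum_image hinj]
    _ ≤ R ^ (-(1/4):ℝ) * 4 * Z1 σ := by
        apply mul_le_mul_of_nonneg_left _ (by positivity)
        exact Summable.sum_le_tsum _ (fun k _ => Real.rpow_nonneg (by positivity) _) (summable_oneD hσ2)
    _ = CL β * R ^ (-(1/4) : ℝ) := by rw [CL, hσ]; ring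

lemma dt_comm (a b : J) : dt a b = dt b a := by simp only [dt]; ring

/-- Half of the kernel bound: pairs with `w(j+p.1) ≤ w(j+p.2)`. -/
lemma Khalf (hβ1 : 3/4 < β) (hβ2 : β < 1) (j : J) (s : Finset (J × J))
    (hs : ∀ p ∈ s, p.1 ≠ 0 ∧ p.2 ≠ 0 ∧ dt p.1 p.2 = 0 ∧ w (j + p.1) ≤ w (j + p.2)) :
    ∑ p ∈ s, w (j + p.1) ^ (-β) * w (j + p.2) ^ (-β) ≤ CL β * Z2 (β + 1/4) := by
  classical
  set t := s.image Prod.fst with ht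
  have hmaps : ∀ p ∈ s, p.1 ∈ t := fun p hp => Finset.mem_image_of_mem _ hp
  rw [← Finset.sum_fiberwise_of_maps_to hmaps
    (fun p => w (j + p.1) ^ (-β) * w (j + p.2) ^ (-β))]
  have hfib : ∀ m ∈ t,
      ∑ p ∈ s.filter (fun p => p.1 = m), w (j + p.1) ^ (-β) * w (j + p.2) ^ (-β)
      ≤ CL β * w (j+m) ^ (-(β + 1/4)) := by
    intro m hm
    obtain ⟨p0, hp0s, hp0⟩ := Finset.mem_image.mp hm
    have hm0 : m ≠ 0 := hp0 ▸ (hs p0 hp0s).1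
    have step1 : ∑ p ∈ s.filter (fun p => p.1 = m), w (j + p.1) ^ (-β) * w (j + p.2) ^ (-β)
        = w (j+m) ^ (-β) * ∑ p ∈ s.filter (fun p => p.1 = m), w (j + p.2) ^ (-β) := by
      rw [Finset.mul_sum]
      apply Finset.sum_congr rfl
      intro p hp
      rw [(Finset.mem_filter.mp hp).2]
    rw [step1]
    have hinj2 : ∀ x ∈ s.filter (fun p => p.1 = m), ∀ y ∈ s.filter (fun p => p.1 = m),
        x.2 = y.2 → x = y := by
      intro x hx y hy hxy
      have h1 := (Finset.mem_filter.mp hx).2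
      have h2 := (Finset.mem_filter.mp hy).2
      exact Prod.ext (by rw [h1, h2]) hxy
    have step2 : ∑ p ∈ s.filter (fun p => p.1 = m), w (j + p.2) ^ (-β)
        = ∑ n ∈ (s.filter (fun p => p.1 = m)).image Prod.snd, w (j + n) ^ (-β) := by
      rw [Finset.sum_image hinj2]
    rw [step2]
    have hline : ∑ n ∈ (s.filter (fun p => p.1 = m)).image Prod.snd, w (j + n) ^ (-β)
        ≤ CL β * (w (j+m)) ^ (-(1/4) : ℝ) := by
      apply line_bound hβ1 hβ2 j m hm0 (w (j+m)) (one_le_w _)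
      intro n hn
      obtain ⟨p, hp, hpn⟩ := Finset.mem_image.mp hn
      obtain ⟨hps, hp1⟩ := Finset.mem_filter.mp hp
      obtain ⟨h1, h2, h3, h4⟩ := hs p hps
      refine ⟨hpn ▸ h2, ?_, ?_⟩
      · rw [← hpn, ← hp1, dt_comm]; exact h3
      · rw [← hpn, ← hp1]; exact h4
    calc w (j+m) ^ (-β) * ∑ n ∈ (s.filter (fun p => p.1 = m)).image Prod.snd, w (j + n) ^ (-β)
        ≤ w (j+m) ^ (-β) * (CL β * (w (j+m)) ^ (-(1/4) : ℝ)) :=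
          mul_le_mul_of_nonneg_left hline (Real.rpow_nonneg (w_pos _).le _)
      _ = CL β * w (j+m) ^ (-(β + 1/4)) := by
          rw [show (-(β+1/4)) = (-β) + (-(1/4):ℝ) by ring, Real.rpow_add (w_pos (j+m))]
          ring
  calc ∑ m ∈ t, ∑ p ∈ s.filter (fun p => p.1 = m), w (j + p.1) ^ (-β) * w (j + p.2) ^ (-β)
      ≤ ∑ m ∈ t, CL β * w (j+m) ^ (-(β + 1/4)) := Finset.sum_le_sum hfib
    _ = CL β * ∑ m ∈ t, w (j+m) ^ (-(β + 1/4)) := by rw [Finset.mul_sum]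
    _ ≤ CL β * Z2 (β + 1/4) := by
        apply mul_le_mul_of_nonneg_left _ (CL_nonneg β)
        have hinj3 : ∀ x ∈ t, ∀ y ∈ t, j + x = j + y → x = y := fun x _ y _ h =>
          add_left_cancel h
        have : ∑ k ∈ t.image (fun m => j + m), w k ^ (-(β+1/4))
            = ∑ m ∈ t, w (j+m) ^ (-(β+1/4)) := Finset.sum_image hinj3
        rw [← this]
        exact Summable.sum_le_tsum _ (fun k _ => Real.rpow_nonneg (w_pos k).le _)
          (summable_twoD (by linarith))

/-- The kernel bound. -/
lemma Kbound (hβ1 : 3/4 < β) (hβ2 : β < 1) (j : J) (s : Finset (J × J))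
    (hs : ∀ p ∈ s, p.1 ≠ 0 ∧ p.2 ≠ 0 ∧ dt p.1 p.2 = 0) :
    ∑ p ∈ s, w (j + p.1) ^ (-β) * w (j + p.2) ^ (-β) ≤ KK β := by
  classical
  rw [← Finset.sum_filter_add_sum_filter_not s (fun p => w (j + p.1) ≤ w (j + p.2))]
  have hK1 : ∑ p ∈ s.filter (fun p => w (j + p.1) ≤ w (j + p.2)),
      w (j + p.1) ^ (-β) * w (j + p.2) ^ (-β) ≤ CL β * Z2 (β + 1/4) := by
    apply Khalf hβ1 hβ2
    intro p hp
    obtain ⟨hps, hle⟩ := Finset.mem_filter.mp hp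
    obtain ⟨h1, h2, h3⟩ := hs p hps
    exact ⟨h1, h2, h3, hle⟩
  have hK2 : ∑ p ∈ s.filter (fun p => ¬ (w (j + p.1) ≤ w (j + p.2))),
      w (j + p.1) ^ (-β) * w (j + p.2) ^ (-β) ≤ CL β * Z2 (β + 1/4) := by
    set s2 := s.filter (fun p => ¬ (w (j + p.1) ≤ w (j + p.2))) with hs2
    have hswap : ∑ p ∈ s2, w (j + p.1) ^ (-β) * w (j + p.2) ^ (-β)
        = ∑ p ∈ s2.image Prod.swap, w (j + p.1) ^ (-β) * w (j + p.2) ^ (-β) := by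
      rw [Finset.sum_image (fun x _ y _ h => Prod.swap_injective h)]
      apply Finset.sum_congr rfl
      intro p hp
      rw [Prod.fst_swap, Prod.snd_swap]
      ring
    rw [hswap]
    apply Khalf hβ1 hβ2
    intro p hp
    obtain ⟨q, hq, hqp⟩ := Finset.mem_image.mp hp
    obtain ⟨hqs, hlt⟩ := Finset.mem_filter.mp hq
    obtain ⟨h1, h2, h3⟩ := hs q hqs
    rw [← hqp]
    refine ⟨by simpa using h2, by simpa using h1, ?_, ?_⟩
    · rw [Prod.fst_swap, Prod.snd_swap, dt_comm]; exact h3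
    · rw [Prod.fst_swap, Prod.snd_swap]
      exact (le_of_lt (lt_of_not_ge hlt))
  have : KK β = CL β * Z2 (β + 1/4) + CL β * Z2 (β + 1/4) := by rw [KK]; ring
  rw [this]
  exact add_le_add hK1 hK2

/-- Finite Cauchy-Schwarz in sqrt form. -/
lemma cs_sqrt {ι : Type*} (s : Finset ι) (f g : ι → ℝ) :
    ∑ i ∈ s, f i * g i ≤ Real.sqrt (∑ i ∈ s, f i ^ 2) * Real.sqrt (∑ i ∈ s, g i ^ 2) := by
  have h := Finset.sum_mul_sq_le_sq_mul_sq s f g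
  calc ∑ i ∈ s, f i * g i ≤ |∑ i ∈ s, f i * g i| := le_abs_self _
    _ = Real.sqrt ((∑ i ∈ s, f i * g i)^2) := (Real.sqrt_sq_eq_abs _).symm
    _ ≤ Real.sqrt ((∑ i ∈ s, f i ^ 2) * (∑ i ∈ s, g i ^ 2)) := Real.sqrt_le_sqrt h
    _ = _ := Real.sqrt_mul (by positivity) _

/-- Finite Minkowski inequality. -/
lemma minkowski {ι : Type*} (s : Finset ι) (u v : ι → ℝ) :
    Real.sqrt (∑ i ∈ s, (u i + v i) ^ 2) ≤
      Real.sqrt (∑ i ∈ s, u i ^ 2) + Real.sqrt (∑ i ∈ s, v i ^ 2) := by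
  set A := Real.sqrt (∑ i ∈ s, u i ^ 2) with hA
  set B := Real.sqrt (∑ i ∈ s, v i ^ 2) with hB
  have hA0 : 0 ≤ A := Real.sqrt_nonneg _
  have hB0 : 0 ≤ B := Real.sqrt_nonneg _
  have hX0 : 0 ≤ ∑ i ∈ s, (u i + v i)^2 := by positivity
  rcases eq_or_lt_of_le hX0 with h0 | hpos
  · rw [← h0, Real.sqrt_zero]; positivity
  · set X := ∑ i ∈ s, (u i + v i)^2 with hXdef
    have expand : X = ∑ i ∈ s, u i * (u i + v i) + ∑ i ∈ s, v i * (u i + v i) := by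
      rw [← Finset.sum_add_distrib]; apply Finset.sum_congr rfl; intros; ring
    have c1 : ∑ i ∈ s, u i * (u i + v i) ≤ A * Real.sqrt X := by
      have h := cs_sqrt s u (fun i => u i + v i); simpa [hA, hXdef] using h
    have c2 : ∑ i ∈ s, v i * (u i + v i) ≤ B * Real.sqrt X := by
      have h := cs_sqrt s v (fun i => u i + v i); simpa [hB, hXdef] using h
    have key : X ≤ (A + B) * Real.sqrt X := by
      calc X = _ := expand
        _ ≤ A * Real.sqrt X + B * Real.sqrt X := add_le_add c1 c2
        _ = (A+B) * Real.sqrt X := by ring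
    have hsX : Real.sqrt X * Real.sqrt X = X := Real.mul_self_sqrt hX0
    have hs_pos : 0 < Real.sqrt X := Real.sqrt_pos.mpr hpos
    nlinarith [key, hsX, hs_pos]

/-- Finite Hölder / interpolation inequality. -/
lemma holder_interp {ι : Type*} (s : Finset ι) (x y : ι → ℝ) (θ : ℝ) (hθ0 : 0 ≤ θ) (hθ1 : θ ≤ 1)
    (hx : ∀ i ∈ s, 0 ≤ x i) (hy : ∀ i ∈ s, 0 ≤ y i) :
    ∑ i ∈ s, (x i) ^ (1 - θ) * (y i) ^ θ ≤
      (∑ i ∈ s, x i) ^ (1 - θ) * (∑ i ∈ s, y i) ^ θ := by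
  set X := ∑ i ∈ s, x i with hXdef
  set Y := ∑ i ∈ s, y i with hYdef
  have hX0 : 0 ≤ X := Finset.sum_nonneg hx
  have hY0 : 0 ≤ Y := Finset.sum_nonneg hy
  rcases eq_or_lt_of_le hθ0 with h0 | hθpos
  · simp only [← h0, sub_zero, Real.rpow_one, Real.rpow_zero, mul_one, hXdef, le_refl]
  rcases eq_or_lt_of_le hθ1 with h1 | hθlt
  · simp only [h1, sub_self, Real.rpow_zero, Real.rpow_one, one_mul, hYdef, le_refl]
  rcases eq_or_lt_of_le hX0 with hX | hX
  · have hz : ∀ i ∈ s, x i = 0 := by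
      intro i hi
      exact (Finset.sum_eq_zero_iff_of_nonneg hx).1 hX.symm i hi
    have hzz : ∀ i ∈ s, x i ^ (1-θ) * y i ^ θ = 0 := by
      intro i hi; rw [hz i hi, Real.zero_rpow (by linarith), zero_mul]
    rw [Finset.sum_eq_zero hzz]
    exact mul_nonneg (Real.rpow_nonneg hX0 _) (Real.rpow_nonneg hY0 _)
  rcases eq_or_lt_of_le hY0 with hY | hY
  · have hz : ∀ i ∈ s, y i = 0 := by
      intro i hi
      exact (Finset.sum_eq_zero_iff_of_nonneg hy).1 hY.symm i hi
    have hzz : ∀ i ∈ s, x i ^ (1-θ) * y i ^ θ = 0 := by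
      intro i hi; rw [hz i hi, Real.zero_rpow (by linarith), mul_zero]
    rw [Finset.sum_eq_zero hzz]
    exact mul_nonneg (Real.rpow_nonneg hX0 _) (Real.rpow_nonneg hY0 _)
  have key : ∀ i ∈ s, x i ^ (1-θ) * y i ^ θ ≤
      X^(1-θ) * Y^θ * ((1-θ) * (x i / X) + θ * (y i / Y)) := by
    intro i hi
    have hgm := Real.geom_mean_le_arith_mean2_weighted (by linarith : (0:ℝ) ≤ 1-θ)
      hθpos.le (div_nonneg (hx i hi) hX0) (div_nonneg (hy i hi) hY0) (by ring)
    have hrw : (x i / X)^(1-θ) * (y i / Y)^θ = x i ^(1-θ) * y i ^θ / (X^(1-θ) * Y^θ) := by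
      rw [Real.div_rpow (hx i hi) hX0, Real.div_rpow (hy i hi) hY0]
      ring
    rw [hrw] at hgm
    have hpos : 0 < X^(1-θ) * Y^θ :=
      mul_pos (Real.rpow_pos_of_pos hX _) (Real.rpow_pos_of_pos hY _)
    calc x i ^ (1-θ) * y i ^ θ = (x i ^(1-θ) * y i ^θ / (X^(1-θ) * Y^θ)) * (X^(1-θ) * Y^θ) := by
          field_simp
      _ ≤ ((1-θ) * (x i / X) + θ * (y i / Y)) * (X^(1-θ) * Y^θ) := by
          apply mul_le_mul_of_nonneg_right hgm hpos.le
      _ = _ := by ring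
  calc ∑ i ∈ s, x i ^ (1-θ) * y i ^ θ
      ≤ ∑ i ∈ s, X^(1-θ) * Y^θ * ((1-θ) * (x i / X) + θ * (y i / Y)) :=
        Finset.sum_le_sum key
    _ = X^(1-θ) * Y^θ * ((1-θ) * (X / X) + θ * (Y / Y)) := by
        rw [← Finset.mul_sum]
        congr 1
        rw [Finset.sum_add_distrib, ← Finset.mul_sum, ← Finset.mul_sum,
          ← Finset.sum_div, ← Finset.sum_div]
    _ = X^(1-θ) * Y^θ := by
        rw [div_self hX.ne', div_self hY.ne']
        ring

/-- resonance identity after substituting the momentum constraint -/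
lemma res_identity (j k1 k3 : J) :
    nsq k1 - nsq (k1 + k3 - j) + nsq k3 - nsq j = -2 * dt (k1 - j) (k3 - j) := by
  simp only [nsq, dt, Prod.fst_add, Prod.snd_add, Prod.fst_sub, Prod.snd_sub]
  ring

/-- pairs `(m,n)` with `j+m, j+n, j+m+n ∈ S` and `m ⊥ n` -/
def Qall (S : Finset J) (j : J) : Finset (J × J) :=
  ((S.image (fun k => k - j)) ×ˢ (S.image (fun k => k - j))).filter
    (fun q => dt q.1 q.2 = 0 ∧ j + q.1 + q.2 ∈ S)

def QG (S : Finset J) (j : J) : Finset (J × J) :=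
  (Qall S j).filter (fun q => ¬ q.1 = 0 ∧ ¬ q.2 = 0)

def Gf (a : J → ℂ) (S : Finset J) (j : J) : ℝ :=
  ∑ q ∈ QG S j, ‖a (j + q.1)‖ * ‖a (j + q.1 + q.2)‖ * ‖a (j + q.2)‖

lemma Gf_nonneg (a : J → ℂ) (S : Finset J) (j : J) : 0 ≤ Gf a S j :=
  Finset.sum_nonneg fun q _ => by positivity

lemma mem_Qall {S : Finset J} {j : J} {q' : J × J} :
    q' ∈ Qall S j ↔ j + q'.1 ∈ S ∧ j + q'.2 ∈ S ∧ dt q'.1 q'.2 = 0 ∧ j + q'.1 + q'.2 ∈ S := by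
  simp only [Qall, Finset.mem_filter, Finset.mem_product, Finset.mem_image]
  constructor
  · rintro ⟨⟨⟨k1, hk1, hk1e⟩, ⟨k2, hk2, hk2e⟩⟩, hd, hm⟩
    have e1 : j + q'.1 = k1 := by rw [← hk1e]; ring
    have e2 : j + q'.2 = k2 := by rw [← hk2e]; ring
    exact ⟨e1 ▸ hk1, e2 ▸ hk2, hd, hm⟩
  · rintro ⟨h1, h2, hd, hm⟩
    exact ⟨⟨⟨j + q'.1, h1, by ring⟩, ⟨j + q'.2, h2, by ring⟩⟩, hd, hm⟩

/-- Fnl as a finite sum over the support cube -/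
lemma Fnl_eq_sum (a : J → ℂ) (S : Finset J) (hS : ∀ k ∉ S, a k = 0) (j : J) :
    Fnl a j = ∑ p ∈ (S ×ˢ S ×ˢ S).filter
      (fun p : J × J × J => p.1 - p.2.1 + p.2.2 = j ∧ nsq p.1 - nsq p.2.1 + nsq p.2.2 = nsq j),
      a p.1 * (starRingEnd ℂ) (a p.2.1) * a p.2.2 := by
  classical
  rw [Fnl, tsum_eq_sum (s := S ×ˢ S ×ˢ S) ?_]
  · rw [Finset.sum_filter]
  · intro p hp
    have h : p.1 ∉ S ∨ p.2.1 ∉ S ∨ p.2.2 ∉ S := by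
      by_contra hcon
      push_neg at hcon
      exact hp (by simp [Finset.mem_product, hcon.1, hcon.2.1, hcon.2.2])
    split_ifs with hcond
    · rcases h with h | h | h <;> rw [hS _ h] <;> simp
    · rfl

/-- pointwise bound on the nonlinearity by the degenerate part plus `Gf` -/
lemma normF_le (a : J → ℂ) (S : Finset J) (hS : ∀ k ∉ S, a k = 0)
    (hsum_c2 : Summable (fun k : J => ‖a k‖^2)) (j : J) :
    ‖Fnl a j‖ ≤ 2 * ‖a j‖ * (∑' k : J, ‖a k‖^2) + Gf a S j := by
  classical
  set SA := ∑' k : J, ‖a k‖^2 with hSA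
  set Dj := (S ×ˢ S ×ˢ S).filter
      (fun p : J × J × J => p.1 - p.2.1 + p.2.2 = j ∧ nsq p.1 - nsq p.2.1 + nsq p.2.2 = nsq j)
    with hDj
  have hnorm1 : ‖Fnl a j‖ ≤ ∑ p ∈ Dj, ‖a p.1‖ * ‖a p.2.1‖ * ‖a p.2.2‖ := by
    rw [Fnl_eq_sum a S hS j]
    refine le_trans (norm_sum_le _ _) (le_of_eq ?_)
    apply Finset.sum_congr rfl
    intro p _
    rw [norm_mul, norm_mul, RCLike.norm_conj]
  have hreindex : ∑ p ∈ Dj, ‖a p.1‖ * ‖a p.2.1‖ * ‖a p.2.2‖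
      = ∑ q ∈ Qall S j, ‖a (j + q.1)‖ * ‖a (j + q.1 + q.2)‖ * ‖a (j + q.2)‖ := by
    refine Finset.sum_nbij' (fun p : J × J × J => (p.1 - j, p.2.2 - j))
      (fun q : J × J => (j + q.1, j + q.1 + q.2, j + q.2)) ?_ ?_ ?_ ?_ ?_
    · intro p hp
      obtain ⟨hmem, hlin, hres⟩ := Finset.mem_filter.mp hp
      simp only [Finset.mem_product] at hmem
      obtain ⟨hp1, hp21, hp22⟩ := hmem
      have h2 : p.2.1 = p.1 + p.2.2 - j := by rw [← hlin]; ring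
      rw [mem_Qall]
      refine ⟨?_, ?_, ?_, ?_⟩
      · have e : j + (p.1 - j) = p.1 := by ring
        rw [e]; exact hp1
      · have e : j + (p.2.2 - j) = p.2.2 := by ring
        rw [e]; exact hp22
      · have key := res_identity j p.1 p.2.2
        rw [← h2] at key
        have : nsq p.1 - nsq p.2.1 + nsq p.2.2 - nsq j = 0 := by rw [hres]; ring
        simp only [this] at key
        linarith
      · have e : j + (p.1 - j) + (p.2.2 - j) = p.2.1 := by rw [h2]; ring
        rw [e]; exact hp21
    · intro q hq
      rw [mem_Qall] at hq
      obtain ⟨h1, h2, hd, hm⟩ := hq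
      rw [hDj, Finset.mem_filter]
      refine ⟨by simp [Finset.mem_product]; exact ⟨h1, hm, h2⟩, by ring, ?_⟩
      have key := res_identity j (j + q.1) (j + q.2)
      have e1 : j + q.1 + (j + q.2) - j = j + q.1 + q.2 := by ring
      have e2 : j + q.1 - j = q.1 := by ring
      have e3 : j + q.2 - j = q.2 := by ring
      rw [e1, e2, e3, hd] at key
      linarith
    · intro p hp
      obtain ⟨hmem, hlin, hres⟩ := Finset.mem_filter.mp hp
      have h2 : p.2.1 = p.1 + p.2.2 - j := by rw [← hlin]; ring
      dsimp only
      refine Prod.ext (by dsimp only; ring) (Prod.ext ?_ (by dsimp only; ring))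
      show j + (p.1 - j) + (p.2.2 - j) = p.2.1
      rw [h2]; ring
    · intro q _
      dsimp only
      exact Prod.ext (by dsimp only; ring) (by dsimp only; ring)
    · intro p hp
      obtain ⟨hmem, hlin, hres⟩ := Finset.mem_filter.mp hp
      have h2 : p.2.1 = p.1 + p.2.2 - j := by rw [← hlin]; ring
      have e1 : j + (p.1 - j) = p.1 := by ring
      have e2 : j + (p.1 - j) + (p.2.2 - j) = p.2.1 := by rw [h2]; ring
      have e3 : j + (p.2.2 - j) = p.2.2 := by ring
      dsimp only
      rw [e2, e1, e3]
  have hsplit : ∑ q ∈ Qall S j, ‖a (j + q.1)‖ * ‖a (j + q.1 + q.2)‖ * ‖a (j + q.2)‖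
      ≤ ‖a j‖ * SA + (‖a j‖ * SA + Gf a S j) := by
    rw [← Finset.sum_filter_add_sum_filter_not (Qall S j) (fun q => q.1 = 0)]
    apply add_le_add
    · have hterm : ∀ q ∈ (Qall S j).filter (fun q => q.1 = 0),
          ‖a (j + q.1)‖ * ‖a (j + q.1 + q.2)‖ * ‖a (j + q.2)‖ = ‖a j‖ * ‖a (j + q.2)‖^2 := by
        intro q hq
        have h0 : q.1 = 0 := (Finset.mem_filter.mp hq).2
        rw [h0, add_zero]
        ring
      rw [Finset.sum_congr rfl hterm, ← Finset.mul_sum]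
      apply mul_le_mul_of_nonneg_left _ (norm_nonneg _)
      have hinj : ∀ x ∈ (Qall S j).filter (fun q => q.1 = 0),
          ∀ y ∈ (Qall S j).filter (fun q => q.1 = 0), j + x.2 = j + y.2 → x = y := by
        intro x hx y hy h
        have hx0 : x.1 = 0 := (Finset.mem_filter.mp hx).2
        have hy0 : y.1 = 0 := (Finset.mem_filter.mp hy).2
        exact Prod.ext (hx0.trans hy0.symm) (add_left_cancel h)
      have himg : ∑ q ∈ (Qall S j).filter (fun q => q.1 = 0), ‖a (j + q.2)‖^2
          = ∑ k ∈ ((Qall S j).filter (fun q => q.1 = 0)).image (fun q => j + q.2), ‖a k‖^2 := by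
        rw [Finset.sum_image hinj]
      rw [himg]
      exact Summable.sum_le_tsum _ (fun k _ => by positivity) hsum_c2
    · rw [← Finset.sum_filter_add_sum_filter_not
        ((Qall S j).filter (fun q => ¬ q.1 = 0)) (fun q => q.2 = 0)]
      apply add_le_add
      · have hterm : ∀ q ∈ ((Qall S j).filter (fun q => ¬ q.1 = 0)).filter (fun q => q.2 = 0),
            ‖a (j + q.1)‖ * ‖a (j + q.1 + q.2)‖ * ‖a (j + q.2)‖ = ‖a j‖ * ‖a (j + q.1)‖^2 := by
          intro q hq
          have h0 : q.2 = 0 := (Finset.mem_filter.mp hq).2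
          rw [h0, add_zero, add_zero]
          ring
        rw [Finset.sum_congr rfl hterm, ← Finset.mul_sum]
        apply mul_le_mul_of_nonneg_left _ (norm_nonneg _)
        set t2 := ((Qall S j).filter (fun q => ¬ q.1 = 0)).filter (fun q => q.2 = 0) with ht2
        have hinj : ∀ x ∈ t2, ∀ y ∈ t2, j + x.1 = j + y.1 → x = y := by
          intro x hx y hy h
          have hx0 : x.2 = 0 := (Finset.mem_filter.mp hx).2
          have hy0 : y.2 = 0 := (Finset.mem_filter.mp hy).2
          exact Prod.ext (add_left_cancel h) (hx0.trans hy0.symm)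
        have himg : ∑ q ∈ t2, ‖a (j + q.1)‖^2
            = ∑ k ∈ t2.image (fun q => j + q.1), ‖a k‖^2 := by
          rw [Finset.sum_image hinj]
        rw [himg]
        exact Summable.sum_le_tsum _ (fun k _ => by positivity) hsum_c2
      · rw [Finset.filter_filter]
        apply le_of_eq
        rfl
  calc ‖Fnl a j‖ ≤ ∑ p ∈ Dj, ‖a p.1‖ * ‖a p.2.1‖ * ‖a p.2.2‖ := hnorm1
    _ = ∑ q ∈ Qall S j, ‖a (j + q.1)‖ * ‖a (j + q.1 + q.2)‖ * ‖a (j + q.2)‖ := hreindex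
    _ ≤ ‖a j‖ * SA + (‖a j‖ * SA + Gf a S j) := hsplit
    _ = 2 * ‖a j‖ * SA + Gf a S j := by ring

def bb (β : ℝ) (a : J → ℂ) (k : J) : ℝ := w k ^ (β/2) * ‖a k‖

lemma bb_zero {β : ℝ} {a : J → ℂ} {k : J} (h : a k = 0) : bb β a k = 0 := by
  rw [bb, h]; simp

def Hf (β : ℝ) (a : J → ℂ) (j : J) : ℝ :=
  ∑' q : J × J, (bb β a (j + q.1) * ‖a (j + q.1 + q.2)‖ * bb β a (j + q.2))^2

lemma Hf_nonneg (β : ℝ) (a : J → ℂ) (j : J) : 0 ≤ Hf β a j :=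
  tsum_nonneg (fun q => sq_nonneg _)

lemma rpow_sq (x : ℝ) (hx : 0 < x) (e : ℝ) : (x ^ e)^(2:ℕ) = x ^ (2*e) := by
  rw [← Real.rpow_natCast (x ^ e) 2, ← Real.rpow_mul hx.le]
  congr 1; ring

lemma summable_g2 (β : ℝ) (a : J → ℂ) (S : Finset J) (hS : ∀ k ∉ S, a k = 0) (j : J) :
    Summable (fun q : J × J =>
      (bb β a (j + q.1) * ‖a (j + q.1 + q.2)‖ * bb β a (j + q.2))^2) := by
  classical
  apply summable_of_ne_finset_zero
    (s := (S.image (fun k => k - j)) ×ˢ (S.image (fun k => k - j)))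
  intro q hq
  have h : j + q.1 ∉ S ∨ j + q.2 ∉ S := by
    by_contra hcon
    push_neg at hcon
    apply hq
    simp only [Finset.mem_product, Finset.mem_image]
    exact ⟨⟨j + q.1, hcon.1, by ring⟩, ⟨j + q.2, hcon.2, by ring⟩⟩
  rcases h with h | h
  · rw [bb_zero (hS _ h)]; ring
  · rw [bb_zero (hS _ h)]; ring

/-- Cauchy–Schwarz step: `Gf ≤ √KK · √Hf`. -/
lemma G_le {β : ℝ} (hβ1 : 3/4 < β) (hβ2 : β < 1) (a : J → ℂ) (S : Finset J)
    (hS : ∀ k ∉ S, a k = 0) (j : J) :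
    Gf a S j ≤ Real.sqrt (KK β) * Real.sqrt (Hf β a j) := by
  have hterm : ∀ q ∈ QG S j,
      ‖a (j + q.1)‖ * ‖a (j + q.1 + q.2)‖ * ‖a (j + q.2)‖ =
      (w (j + q.1) ^ (-(β/2)) * w (j + q.2) ^ (-(β/2))) *
        (bb β a (j + q.1) * ‖a (j + q.1 + q.2)‖ * bb β a (j + q.2)) := by
    intro q _
    have h1 : w (j + q.1) ^ (-(β/2)) * w (j + q.1) ^ (β/2) = 1 := by
      rw [← Real.rpow_add (w_pos _)]; simp
    have h2 : w (j + q.2) ^ (-(β/2)) * w (j + q.2) ^ (β/2) = 1 := by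
      rw [← Real.rpow_add (w_pos _)]; simp
    calc ‖a (j + q.1)‖ * ‖a (j + q.1 + q.2)‖ * ‖a (j + q.2)‖
        = (w (j + q.1) ^ (-(β/2)) * w (j + q.1) ^ (β/2)) *
            (w (j + q.2) ^ (-(β/2)) * w (j + q.2) ^ (β/2)) *
            (‖a (j + q.1)‖ * ‖a (j + q.1 + q.2)‖ * ‖a (j + q.2)‖) := by
          rw [h1, h2]; ring
      _ = _ := by rw [bb, bb]; ring
  rw [Gf, Finset.sum_congr rfl hterm]
  refine le_trans (cs_sqrt _ _ _) ?_
  apply mul_le_mul ?_ ?_ (Real.sqrt_nonneg _) (Real.sqrt_nonneg _)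
  · apply Real.sqrt_le_sqrt
    have he : ∀ q ∈ QG S j, ((w (j + q.1) ^ (-(β/2)) * w (j + q.2) ^ (-(β/2))))^2
        = w (j + q.1) ^ (-β) * w (j + q.2) ^ (-β) := by
      intro q _
      rw [mul_pow, rpow_sq _ (w_pos _), rpow_sq _ (w_pos _)]
      congr 2 <;> ring
    rw [Finset.sum_congr rfl he]
    apply Kbound hβ1 hβ2
    intro p hp
    obtain ⟨hql, hne⟩ := Finset.mem_filter.mp hp
    obtain ⟨_, _, hd, _⟩ := mem_Qall.mp hql
    exact ⟨hne.1, hne.2, hd⟩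
  · apply Real.sqrt_le_sqrt
    rw [Hf]
    exact Summable.sum_le_tsum _ (fun q _ => sq_nonneg _) (summable_g2 β a S hS j)

lemma tsum_prod_mul {α γ : Type*} (f : α → ℝ) (g : γ → ℝ) (hf : Summable f) (hg : Summable g)
    (hf0 : ∀ x, 0 ≤ f x) (hg0 : ∀ x, 0 ≤ g x) :
    ∑' x : α × γ, f x.1 * g x.2 = (∑' k, f k) * (∑' k, g k) := by
  have hfg : Summable (fun x : α × γ => f x.1 * g x.2) := hf.mul_of_nonneg hg hf0 hg0
  rw [Summable.tsum_prod' hfg (fun b => (hg.mul_left (f b)))]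
  calc ∑' (b : α) (c : γ), f b * g c = ∑' b : α, f b * ∑' c : γ, g c :=
        tsum_congr (fun b => tsum_mul_left)
    _ = _ := tsum_mul_right

/-- change of variables `(j,m,n) ↦ (j+m, j+m+n, j+n)` -/
def e3 : (J × J × J) ≃ (J × J × J) where
  toFun r := (r.1 + r.2.1, (r.1 + r.2.1 + r.2.2, r.1 + r.2.2))
  invFun x := (x.1 + x.2.2 - x.2.1, (x.2.1 - x.2.2, x.2.1 - x.1))
  left_inv r := by
    obtain ⟨r1, r2, r3⟩ := r
    simp only [Prod.mk.injEq]
    exact ⟨by ring, by ring, by ring⟩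
  right_inv x := by
    obtain ⟨x1, x2, x3⟩ := x
    simp only [Prod.mk.injEq]
    exact ⟨by ring, by ring, by ring⟩

set_option maxHeartbeats 1000000 in
lemma sumH (β : ℝ) (a : J → ℂ) (S : Finset J) (hS : ∀ k ∉ S, a k = 0)
    (hsum_c2 : Summable (fun k : J => ‖a k‖^2))
    (hsum_bb2 : Summable (fun k : J => (bb β a k)^2)) :
    Summable (fun j : J => Hf β a j) ∧
    ∑' j : J, Hf β a j =
      (∑' k : J, (bb β a k)^2) * ((∑' k : J, ‖a k‖^2) * (∑' k : J, (bb β a k)^2)) := by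
  classical
  set GG : J × J × J → ℝ := fun x => (bb β a x.1)^2 * (‖a x.2.1‖^2 * (bb β a x.2.2)^2)
    with hGGdef
  have hinner : Summable (fun y : J × J => ‖a y.1‖^2 * (bb β a y.2)^2) :=
    hsum_c2.mul_of_nonneg hsum_bb2 (fun k => sq_nonneg _) (fun k => sq_nonneg _)
  have hGG : Summable GG :=
    hsum_bb2.mul_of_nonneg hinner (fun k => sq_nonneg _)
      (fun y => mul_nonneg (sq_nonneg _) (sq_nonneg _))
  have hFF : Summable (GG ∘ e3) := (Equiv.summable_iff e3).mpr hGG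
  have hint : ∀ j : J, ∀ q : J × J,
      (bb β a (j + q.1) * ‖a (j + q.1 + q.2)‖ * bb β a (j + q.2))^2 = (GG ∘ e3) (j, q) := by
    intro j q
    show _ = GG (e3 (j, q))
    simp only [hGGdef, e3, Equiv.coe_fn_mk]
    ring
  have hHf_eq : ∀ j : J, Hf β a j = ∑' q : J × J, (GG ∘ e3) (j, q) := by
    intro j
    rw [Hf]
    exact tsum_congr (fun q => hint j q)
  constructor
  · have hmarg : Summable (fun j : J => ∑' q : J × J, (GG ∘ e3) (j, q)) := by
      apply summable_of_ne_finset_zero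
        (s := Finset.image (fun x : J × J × J => x.1 + x.2.2 - x.2.1) (S ×ˢ S ×ˢ S))
      intro j hj
      have hzero : ∀ q : J × J, (GG ∘ e3) (j, q) = 0 := by
        intro q
        rw [← hint j q]
        by_contra hne
        have hb1 : a (j + q.1) ≠ 0 := by
          intro h0; apply hne; rw [bb_zero h0]; ring
        have hb2 : a (j + q.1 + q.2) ≠ 0 := by
          intro h0; apply hne; rw [h0]; simp
        have hb3 : a (j + q.2) ≠ 0 := by
          intro h0; apply hne; rw [bb_zero h0]; ring
        have m1 : j + q.1 ∈ S := by by_contra hm; exact hb1 (hS _ hm)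
        have m2 : j + q.1 + q.2 ∈ S := by by_contra hm; exact hb2 (hS _ hm)
        have m3 : j + q.2 ∈ S := by by_contra hm; exact hb3 (hS _ hm)
        apply hj
        apply Finset.mem_image.mpr
        refine ⟨(j + q.1, (j + q.1 + q.2, j + q.2)), ?_, by ring⟩
        simp only [Finset.mem_product]
        exact ⟨m1, m2, m3⟩
      rw [tsum_congr hzero, tsum_zero]
    exact Summable.congr (f := fun j : J => ∑' q : J × J, (GG ∘ e3) (j, q))
      (g := fun j : J => Hf β a j) hmarg (fun j => (hHf_eq j).symm)
  · have h1 : ∑' j : J, Hf β a j = ∑' r : J × J × J, (GG ∘ e3) r := by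
      rw [Summable.tsum_prod' hFF (fun b => hFF.prod_factor b)]
      exact tsum_congr (fun j => hHf_eq j)
    have h2 : ∑' r : J × J × J, (GG ∘ e3) r = ∑' x : J × J × J, GG x := e3.tsum_eq GG
    have h3 : ∑' x : J × J × J, GG x =
        (∑' k : J, (bb β a k)^2) * ((∑' k : J, ‖a k‖^2) * (∑' k : J, (bb β a k)^2)) := by
      rw [hGGdef]
      rw [tsum_prod_mul (fun k : J => (bb β a k)^2) (fun y : J × J => ‖a y.1‖^2 * (bb β a y.2)^2)
        hsum_bb2 hinner (fun k => sq_nonneg _)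
        (fun y => mul_nonneg (sq_nonneg _) (sq_nonneg _))]
      congr 1
      rw [tsum_prod_mul (fun k : J => ‖a k‖^2) (fun k : J => (bb β a k)^2)
        hsum_c2 hsum_bb2 (fun k => sq_nonneg _) (fun k => sq_nonneg _)]
    rw [h1, h2, h3]

/-- interpolation: `∑ ⟨k⟩^{2β}|a_k|² ≤ (∑|a_k|²)^{1-β} (∑⟨k⟩²|a_k|²)^β`. -/
lemma interp {β : ℝ} (hβ1 : 3/4 < β) (hβ2 : β < 1) (a : J → ℂ) (S : Finset J)
    (hS : ∀ k ∉ S, a k = 0) :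
    ∑' k : J, (bb β a k)^2 ≤
      (∑' k : J, ‖a k‖^2) ^ (1 - β) * (∑' k : J, w k * ‖a k‖^2) ^ β := by
  classical
  have hzS : ∀ k ∉ S, ‖a k‖ = 0 := fun k hk => by rw [hS k hk]; simp
  have h1 : ∑' k : J, (bb β a k)^2 = ∑ k ∈ S, (bb β a k)^2 :=
    tsum_eq_sum (fun k hk => by rw [bb_zero (hS k hk)]; ring)
  have h2 : ∑' k : J, ‖a k‖^2 = ∑ k ∈ S, ‖a k‖^2 :=
    tsum_eq_sum (fun k hk => by rw [hzS k hk]; ring)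
  have h3 : ∑' k : J, w k * ‖a k‖^2 = ∑ k ∈ S, w k * ‖a k‖^2 :=
    tsum_eq_sum (fun k hk => by rw [hzS k hk]; ring)
  rw [h1, h2, h3]
  have hh := holder_interp S (fun k => ‖a k‖^2) (fun k => w k * ‖a k‖^2) β
    (by linarith) (by linarith) (fun k _ => sq_nonneg _)
    (fun k _ => mul_nonneg (w_pos k).le (sq_nonneg _))
  refine le_trans (le_of_eq ?_) hh
  apply Finset.sum_congr rfl
  intro k _
  by_cases hc : ‖a k‖ = 0
  · simp [bb, hc, Real.zero_rpow (show (1:ℝ) - β ≠ 0 by linarith),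
      Real.zero_rpow (show β ≠ 0 by linarith)]
  · have hc2 : (0:ℝ) < ‖a k‖^2 := by positivity
    have hbbsq : (bb β a k)^2 = w k ^ β * ‖a k‖^2 := by
      rw [bb, mul_pow, rpow_sq _ (w_pos k)]
      congr 2
      ring
    rw [hbbsq, Real.mul_rpow (w_pos k).le hc2.le]
    have hcc : (‖a k‖^2:ℝ)^(1-β) * (‖a k‖^2:ℝ)^β = ‖a k‖^2 := by
      rw [← Real.rpow_add hc2]
      norm_num
    calc w k ^ β * ‖a k‖^2
        = w k ^ β * ((‖a k‖^2:ℝ)^(1-β) * (‖a k‖^2:ℝ)^β) := by rw [hcc]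
      _ = (‖a k‖^2:ℝ)^(1-β) * (w k ^ β * (‖a k‖^2:ℝ)^β) := by ring

end ResAux

open ResAux in
/-- `‖F(a)‖_{l²} ≤ C ‖a‖_{l²}^{3-2β} ‖a‖_{h¹}^{2β}` for every `3/4 < β < 1`,
i.e. `‖F(a)‖_{l²} ≲ ‖a‖_{l²}^{δ₁} ‖a‖_{h¹}^{3-δ₁}` with `δ₁ = 3 - 2β ∈ (1, 3/2)`. -/
theorem l2_interpolated_estimate_resonant_nonlinearity :
    ∀ β : ℝ, 3 / 4 < β → β < 1 → ∃ C : ℝ, ∀ a : ℤ × ℤ → ℂ, (Function.support a).Finite →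
      hnorm 0 (Fnl a) ≤ C * hnorm 0 a ^ (3 - 2 * β) * hnorm 1 a ^ (2 * β) := by
  intro β hβ1 hβ2
  refine ⟨2 + Real.sqrt (KK β), ?_⟩
  intro a hfin
  classical
  by_cases ha : a = 0
  · subst ha
    have hF : ∀ j : J, Fnl (0 : J → ℂ) j = 0 := by
      intro j
      rw [Fnl]
      have hz : ∀ p : J × J × J,
          (if p.1 - p.2.1 + p.2.2 = j ∧ nsq p.1 - nsq p.2.1 + nsq p.2.2 = nsq j then
            (0 : J → ℂ) p.1 * (starRingEnd ℂ) ((0 : J → ℂ) p.2.1) * (0 : J → ℂ) p.2.2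
          else 0) = 0 := by
        intro p; split_ifs <;> simp
      rw [tsum_congr hz, tsum_zero]
    have h0 : hnorm 0 (0 : J → ℂ) = 0 := by
      rw [hnorm]
      have hz : ∀ j : J, ((1:ℝ) + (nsq j : ℝ)) ^ (0:ℝ) * ‖(0 : J → ℂ) j‖^2 = 0 := by
        intro j; simp
      rw [tsum_congr hz, tsum_zero, Real.zero_rpow (by norm_num)]
    have hFn : hnorm 0 (Fnl (0 : J → ℂ)) = 0 := by
      rw [hnorm]
      have hz : ∀ j : J, ((1:ℝ) + (nsq j : ℝ)) ^ (0:ℝ) * ‖Fnl (0 : J → ℂ) j‖^2 = 0 := by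
        intro j; rw [hF j]; simp
      rw [tsum_congr hz, tsum_zero, Real.zero_rpow (by norm_num)]
    rw [hFn, h0, Real.zero_rpow (show (3:ℝ) - 2*β ≠ 0 by nlinarith), mul_zero, zero_mul]
  -- main case
  · set S : Finset J := hfin.toFinset with hSdef
    have hS : ∀ k ∉ S, a k = 0 := by
      intro k hk
      by_contra h
      exact hk (hfin.mem_toFinset.mpr h)
    obtain ⟨k0, hk0⟩ : ∃ k, a k ≠ 0 := by
      by_contra h; push_neg at h; exact ha (funext h)
    have hsum_c2 : Summable (fun k : J => ‖a k‖^2) :=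
      summable_of_ne_finset_zero (s := S) (fun k hk => by rw [hS k hk]; simp)
    have hsum_wc2 : Summable (fun k : J => w k * ‖a k‖^2) :=
      summable_of_ne_finset_zero (s := S) (fun k hk => by rw [hS k hk]; simp)
    have hsum_bb2 : Summable (fun k : J => (bb β a k)^2) :=
      summable_of_ne_finset_zero (s := S) (fun k hk => by rw [bb_zero (hS k hk)]; ring)
    set SA := ∑' k : J, ‖a k‖^2 with hSAdef
    set N1 := ∑' k : J, w k * ‖a k‖^2 with hN1def
    set HB := ∑' k : J, (bb β a k)^2 with hHBdef
    have hSA_pos : 0 < SA := by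
      have hterm : 0 < ‖a k0‖^2 := by
        have := norm_pos_iff.mpr hk0
        positivity
      exact lt_of_lt_of_le hterm (Summable.le_tsum hsum_c2 k0 (fun j _ => by positivity))
    have hSA_le_N1 : SA ≤ N1 :=
      Summable.tsum_le_tsum (fun k => le_mul_of_one_le_left (by positivity) (one_le_w k))
        hsum_c2 hsum_wc2
    have hN1_pos : 0 < N1 := lt_of_lt_of_le hSA_pos hSA_le_N1
    have hHB_nonneg : 0 ≤ HB := tsum_nonneg (fun k => sq_nonneg _)
    have hn0 : hnorm 0 a = SA ^ ((1:ℝ)/2) := by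
      rw [hnorm]
      congr 1
      exact tsum_congr (fun k => by rw [Real.rpow_zero, one_mul])
    have hn1 : hnorm 1 a = N1 ^ ((1:ℝ)/2) := by
      rw [hnorm]
      congr 1
      exact tsum_congr (fun k => by rw [Real.rpow_one]; rfl)
    set T := Finset.image (fun p : J × J × J => p.1 - p.2.1 + p.2.2) (S ×ˢ S ×ˢ S) with hT
    have hFoff : ∀ j ∉ T, Fnl a j = 0 := by
      intro j hj
      rw [Fnl_eq_sum a S hS j,
        Finset.filter_false_of_mem (fun p hp hcond =>
          hj (Finset.mem_image.mpr ⟨p, hp, hcond.1⟩)), Finset.sum_empty]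
    have hFnorm : hnorm 0 (Fnl a) = Real.sqrt (∑ j ∈ T, ‖Fnl a j‖^2) := by
      rw [hnorm]
      have e : ∀ j : J, ((1:ℝ) + (nsq j : ℝ)) ^ (0:ℝ) * ‖Fnl a j‖^2 = ‖Fnl a j‖^2 := by
        intro j; rw [Real.rpow_zero, one_mul]
      rw [tsum_congr e, tsum_eq_sum (s := T) (fun j hj => by rw [hFoff j hj]; simp),
        ← Real.sqrt_eq_rpow]
    have step1 : ∑ j ∈ T, ‖Fnl a j‖^2 ≤ ∑ j ∈ T, (2*‖a j‖*SA + Gf a S j)^2 := by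
      apply Finset.sum_le_sum
      intro j _
      exact pow_le_pow_left₀ (norm_nonneg _) (normF_le a S hS hsum_c2 j) 2
    have mink := minkowski T (fun j => 2*‖a j‖*SA) (fun j => Gf a S j)
    have piece1 : Real.sqrt (∑ j ∈ T, (2*‖a j‖*SA)^2) ≤ 2 * SA * Real.sqrt SA := by
      have h1 : ∑ j ∈ T, (2*‖a j‖*SA)^2 = 4*SA^2 * ∑ j ∈ T, ‖a j‖^2 := by
        rw [Finset.mul_sum]
        apply Finset.sum_congr rfl
        intros; ring
      have h2 : ∑ j ∈ T, ‖a j‖^2 ≤ SA :=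
        Summable.sum_le_tsum _ (fun k _ => by positivity) hsum_c2
      have h3 : ∑ j ∈ T, (2*‖a j‖*SA)^2 ≤ (2*SA*Real.sqrt SA)^2 := by
        rw [h1]
        have e : (2*SA*Real.sqrt SA)^2 = 4*SA^2*SA := by
          rw [mul_pow, mul_pow, Real.sq_sqrt hSA_pos.le]
          ring
        rw [e]
        exact mul_le_mul_of_nonneg_left h2 (by positivity)
      calc Real.sqrt (∑ j ∈ T, (2*‖a j‖*SA)^2)
          ≤ Real.sqrt ((2*SA*Real.sqrt SA)^2) := Real.sqrt_le_sqrt h3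
        _ = 2*SA*Real.sqrt SA := Real.sqrt_sq (by positivity)
    obtain ⟨hHsum, hHeq⟩ := sumH β a S hS hsum_c2 hsum_bb2
    have piece2 : Real.sqrt (∑ j ∈ T, (Gf a S j)^2)
        ≤ Real.sqrt (KK β) * Real.sqrt SA * HB := by
      have hG2 : ∀ j ∈ T, (Gf a S j)^2 ≤ KK β * Hf β a j := by
        intro j _
        have hj := G_le hβ1 hβ2 a S hS j
        have h0 : 0 ≤ Gf a S j := Gf_nonneg a S j
        have hp := pow_le_pow_left₀ h0 hj 2
        rwa [mul_pow, Real.sq_sqrt (KK_nonneg β), Real.sq_sqrt (Hf_nonneg β a j)] at hp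
      have hsum1 : ∑ j ∈ T, (Gf a S j)^2 ≤ KK β * ∑' j : J, Hf β a j := by
        calc ∑ j ∈ T, (Gf a S j)^2 ≤ ∑ j ∈ T, KK β * Hf β a j := Finset.sum_le_sum hG2
          _ = KK β * ∑ j ∈ T, Hf β a j := by rw [Finset.mul_sum]
          _ ≤ KK β * ∑' j : J, Hf β a j :=
              mul_le_mul_of_nonneg_left
                (Summable.sum_le_tsum _ (fun j _ => Hf_nonneg β a j) hHsum) (KK_nonneg β)
      rw [hHeq] at hsum1
      have e : KK β * (HB * (SA * HB)) = (Real.sqrt (KK β) * Real.sqrt SA * HB)^2 := by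
        rw [mul_pow, mul_pow, Real.sq_sqrt (KK_nonneg β), Real.sq_sqrt hSA_pos.le]
        ring
      calc Real.sqrt (∑ j ∈ T, (Gf a S j)^2)
          ≤ Real.sqrt ((Real.sqrt (KK β) * Real.sqrt SA * HB)^2) :=
            Real.sqrt_le_sqrt (by rw [← e]; exact hsum1)
        _ = _ := Real.sqrt_sq (by positivity)
    have hinterp : HB ≤ SA ^ (1-β) * N1 ^ β := interp hβ1 hβ2 a S hS
    have main : hnorm 0 (Fnl a) ≤ 2*SA*Real.sqrt SA + Real.sqrt (KK β) * Real.sqrt SA * HB := by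
      rw [hFnorm]
      calc Real.sqrt (∑ j ∈ T, ‖Fnl a j‖^2)
          ≤ Real.sqrt (∑ j ∈ T, (2*‖a j‖*SA + Gf a S j)^2) := Real.sqrt_le_sqrt step1
        _ ≤ Real.sqrt (∑ j ∈ T, (2*‖a j‖*SA)^2) + Real.sqrt (∑ j ∈ T, (Gf a S j)^2) := mink
        _ ≤ 2*SA*Real.sqrt SA + Real.sqrt (KK β) * Real.sqrt SA * HB :=
            add_le_add piece1 piece2
    rw [hn0, hn1]
    have e0 : (SA ^ ((1:ℝ)/2)) ^ (3-2*β) = SA ^ ((3-2*β)/2) := by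
      rw [← Real.rpow_mul hSA_pos.le]
      congr 1; ring
    have e1 : (N1 ^ ((1:ℝ)/2)) ^ (2*β) = N1 ^ β := by
      rw [← Real.rpow_mul hN1_pos.le]
      congr 1; ring
    rw [e0, e1]
    have tA : SA ^ ((3:ℝ)/2) = SA * Real.sqrt SA := by
      rw [Real.sqrt_eq_rpow, show ((3:ℝ)/2) = 1 + 1/2 by norm_num,
        Real.rpow_add hSA_pos, Real.rpow_one]
    have tB : SA ^ ((3:ℝ)/2) = SA ^ ((3-2*β)/2) * SA ^ β := by
      rw [← Real.rpow_add hSA_pos]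
      congr 1; ring
    have tC : Real.sqrt SA * SA ^ (1-β) = SA ^ ((3-2*β)/2) := by
      rw [Real.sqrt_eq_rpow, ← Real.rpow_add hSA_pos]
      congr 1; ring
    have t3 : SA ^ β ≤ N1 ^ β := Real.rpow_le_rpow hSA_pos.le hSA_le_N1 (by linarith)
    have hX0 : 0 ≤ SA ^ ((3-2*β)/2) := Real.rpow_nonneg hSA_pos.le _
    calc hnorm 0 (Fnl a)
        ≤ 2*SA*Real.sqrt SA + Real.sqrt (KK β) * Real.sqrt SA * HB := main
      _ ≤ 2*(SA ^ ((3-2*β)/2) * N1 ^ β) +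
            Real.sqrt (KK β) * (SA ^ ((3-2*β)/2) * N1 ^ β) := by
          apply add_le_add
          · have e : 2*SA*Real.sqrt SA = 2*(SA ^ ((3-2*β)/2) * SA ^ β) := by
              rw [mul_assoc, ← tA, tB]
            rw [e]
            exact mul_le_mul_of_nonneg_left
              (mul_le_mul_of_nonneg_left t3 hX0) (by norm_num)
          · rw [mul_assoc]
            apply mul_le_mul_of_nonneg_left _ (Real.sqrt_nonneg _)
            calc Real.sqrt SA * HB ≤ Real.sqrt SA * (SA ^ (1-β) * N1 ^ β) :=
                  mul_le_mul_of_nonneg_left hinterp (Real.sqrt_nonneg _)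
              _ = (Real.sqrt SA * SA ^ (1-β)) * N1 ^ β := by ring
              _ = SA ^ ((3-2*β)/2) * N1 ^ β := by rw [tC]
      _ = (2 + Real.sqrt (KK β)) * SA ^ ((3-2*β)/2) * N1 ^ β := by ring
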